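/- Let A be a divisible abelian group and G an abelian group. A central extension 1 → A → Ĝ → G → 1 splits (admits a group-theoretic section G → Ĝ) if and only if the commutator pairing ⟨a,b⟩ = [â,b̂] on G × G with values in A is identically trivial. -/

import Mathlib

open scoped commutatorElement

/-- A central extension `1 → A → Ĝ →π G → 1` of an abelian group `G` by a divisible
abelian group `A` splits if and only if the commutator pairing
`⟨a,b⟩ = [â,b̂]` on `G × G` is identically trivial. -/
theorem central_extension_by_divisible_splits_iff_pairing_trivial
    {Ghat G : Type*} [Group Ghat] [CommGroup G] (π : Ghat →* G)
    (hsurj : Function.Surjective π) (hcent : π.ker ≤ Subgroup.center Ghat)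
    (hdiv : ∀ a : Ghat, π a = 1 → ∀ n : ℕ, 0 < n → ∃ b : Ghat, π b = 1 ∧ b ^ n = a) :
    (∃ s : G →* Ghat, ∀ g : G, π (s g) = g) ↔
      (∀ a b : G, ∀ x y : Ghat, π x = a → π y = b → ⁅x, y⁆ = 1) := by
  constructor
  · rintro ⟨s, hs⟩ a b x y hx hy
    have hk : π ((s a)⁻¹ * x) = 1 := by simp [hx, hs]
    have hl : π ((s b)⁻¹ * y) = 1 := by simp [hy, hs]
    have hkc := Subgroup.mem_center_iff.mp (hcent hk)
    have hlc := Subgroup.mem_center_iff.mp (hcent hl)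
    have ck : ∀ g : Ghat, Commute g ((s a)⁻¹ * x) := fun g => hkc g
    have cl : ∀ g : Ghat, Commute g ((s b)⁻¹ * y) := fun g => hlc g
    have c1 : Commute (s a) (s b) := by
      show s a * s b = s b * s a
      rw [← map_mul, ← map_mul, mul_comm a b]
    have hxs : x = s a * ((s a)⁻¹ * x) := by group
    have hys : y = s b * ((s b)⁻¹ * y) := by group
    rw [commutatorElement_eq_one_iff_mul_comm, hxs, hys]
    exact (Commute.mul_left (c1.mul_right (cl (s a)))
      ((ck ((s b) * ((s b)⁻¹ * y))).symm)).eq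
  · intro hpair
    -- `Ghat` is commutative
    have hcomm : ∀ x y : Ghat, x * y = y * x := fun x y =>
      commutatorElement_eq_one_iff_mul_comm.mp (hpair (π x) (π y) x y rfl rfl)
    letI : CommGroup Ghat := { (inferInstance : Group Ghat) with mul_comm := hcomm }
    -- pass to additive world
    let φ : Additive Ghat →+ Additive G := MonoidHom.toAdditive π
    let K : AddSubgroup (Additive Ghat) := φ.ker
    have hdivK : ∀ (a : K) (n : ℕ), 0 < n → ∃ b : K, n • b = a := by
      intro a n hn
      obtain ⟨b, hb1, hb2⟩ := hdiv a.1.toMul a.2 n hn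
      refine ⟨⟨Additive.ofMul b, hb1⟩, ?_⟩
      ext
      show ((n • (Additive.ofMul b) : Additive Ghat)).toMul = a.1.toMul
      rw [toMul_nsmul, toMul_ofMul, hb2]
    haveI : DivisibleBy K ℕ :=
      { div := fun a n => if h : 0 < n then (hdivK a n h).choose else 0
        div_zero := fun a => by simp
        div_cancel := fun {n} a hn => by
          simp only [dif_pos (Nat.pos_of_ne_zero hn)]
          exact (hdivK a n (Nat.pos_of_ne_zero hn)).choose_spec }
    haveI : DivisibleBy K ℤ := AddGroup.divisibleByIntOfDivisibleByNat K
    -- divisible hence Baer, extend the identity of K along K ↪ Additive Ghat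
    obtain ⟨h, hh⟩ := (Module.Baer.of_divisible K).extension_property_addMonoidHom
      K.subtype K.subtype_injective (AddMonoidHom.id K)
    -- the retraction, multiplicatively
    let r : Ghat → Ghat := fun x => ((h (Additive.ofMul x) : Additive Ghat)).toMul
    have hrmul : ∀ x y : Ghat, r (x * y) = r x * r y := by
      intro x y
      show (((h (Additive.ofMul x + Additive.ofMul y) : K) : Additive Ghat)).toMul = _
      rw [map_add]; rfl
    have hrker : ∀ x : Ghat, π (r x) = 1 := by
      intro x
      have : (h (Additive.ofMul x)).1 ∈ K := (h (Additive.ofMul x)).2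
      exact this
    have hrfix : ∀ x : Ghat, π x = 1 → r x = x := by
      intro x hx
      have hxK : Additive.ofMul x ∈ K := hx
      have := DFunLike.congr_fun hh ⟨Additive.ofMul x, hxK⟩
      show (((h (Additive.ofMul x) : K) : Additive Ghat)).toMul = x
      rw [show h (Additive.ofMul x) = ⟨Additive.ofMul x, hxK⟩ from this]
      rfl
    -- σ : x ↦ x * (r x)⁻¹ kills the kernel and has the same projection
    let σ : Ghat →* Ghat :=
      { toFun := fun x => x * (r x)⁻¹
        map_one' := by
          have : r 1 = 1 := hrfix 1 (map_one π)
          simp [this]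
        map_mul' := by
          intro x y
          show x * y * (r (x * y))⁻¹ = x * (r x)⁻¹ * (y * (r y)⁻¹)
          rw [hrmul, mul_inv, mul_mul_mul_comm] }
    have hker : π.ker ≤ σ.ker := by
      intro x hx
      have hx' : π x = 1 := hx
      show x * (r x)⁻¹ = 1
      rw [hrfix x hx', mul_inv_cancel]
    refine ⟨π.liftOfRightInverse (Function.surjInv hsurj)
      (Function.rightInverse_surjInv hsurj) ⟨σ, hker⟩, ?_⟩
    intro g
    obtain ⟨x, rfl⟩ := hsurj g
    rw [MonoidHom.liftOfRightInverse_comp_apply]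
    show π (x * (r x)⁻¹) = π x
    rw [map_mul, map_inv, hrker, inv_one, mul_one]
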